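/- arXiv:2205.10443 — 2 statements merged into one kernel-verified Lean document; each statement's English description precedes it below -/
import Mathlib

section
/- Let G and H be locally compact Hausdorff topological groups, and suppose G can be covered by a family of compact subsets of cardinality strictly less than the continuum 𝔠 = 2^ℵ₀. Then every continuous surjective group homomorphism φ : G → H is an open map. -/
open Set Topology Pointwise

universe u

private lemma interior_union_empty' {X : Type u} [TopologicalSpace X] {A B : Set X}
    (hA : IsClosed A) (hiA : interior A = ∅) (hiB : interior B = ∅) :
    interior (A ∪ B) = ∅ := by
  have h1 : interior (A ∪ B) \ A ⊆ interior B := by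
    apply interior_maximal
    · rintro z ⟨hz, hzA⟩
      rcases interior_subset hz with h | h
      · exact absurd h hzA
      · exact h
    · exact isOpen_interior.sdiff hA
  rw [hiB, subset_empty_iff, diff_eq_empty] at h1
  have h2 := interior_maximal h1 isOpen_interior
  rwa [hiA, subset_empty_iff] at h2

private lemma interior_finset_biUnion_empty' {X : Type u} [TopologicalSpace X] {ι : Type*}
    (s : Finset ι) (f : ι → Set X) (hc : ∀ i ∈ s, IsClosed (f i))
    (hi : ∀ i ∈ s, interior (f i) = ∅) : interior (⋃ i ∈ s, f i) = ∅ := by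
  classical
  induction s using Finset.induction_on with
  | empty => simp
  | @insert a t hat ih =>
    rw [Finset.set_biUnion_insert]
    exact interior_union_empty' (hc a (Finset.mem_insert_self a t))
      (hi a (Finset.mem_insert_self a t))
      (ih (fun i hi' => hc i (Finset.mem_insert_of_mem hi'))
        (fun i hi' => hi i (Finset.mem_insert_of_mem hi')))

/-- Finite separation step: shrink finitely many nonempty open sets to smaller open sets
with compact closures, pairwise separated with respect to a closed nowhere dense symmetric
set `D`. -/
private lemma step_lemma {X : Type u} [TopologicalSpace X] [Group X] [IsTopologicalGroup X]
    [LocallyCompactSpace X] [T2Space X] {ι : Type*} [Fintype ι] [DecidableEq ι]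
    {D : Set X} (hD : IsClosed D) (hDi : interior D = ∅) (hDs : D⁻¹ = D)
    (O : ι → Set X) (hO : ∀ i, IsOpen (O i) ∧ (O i).Nonempty) :
    ∃ O' : ι → Set X, ∀ i, IsOpen (O' i) ∧ (O' i).Nonempty ∧ IsCompact (closure (O' i)) ∧
      closure (O' i) ⊆ O i ∧
      ∀ j, i ≠ j → ∀ a ∈ closure (O' i), ∀ b ∈ closure (O' j), a⁻¹ * b ∉ D := by
  classical
  -- choose pairwise D-separated points
  have hpts : ∀ s : Finset ι, ∃ x : ι → X, (∀ i ∈ s, x i ∈ O i) ∧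
      ∀ i ∈ s, ∀ j ∈ s, i ≠ j → (x i)⁻¹ * x j ∉ D := by
    intro s
    induction s using Finset.induction_on with
    | empty => exact ⟨fun _ => 1, by simp, by simp⟩
    | @insert k t hkt ih =>
      obtain ⟨x, hx1, hx2⟩ := ih
      set F : Set X := ⋃ i ∈ t, x i • D with hF
      have hFc : IsClosed F := Set.Finite.isClosed_biUnion t.finite_toSet
        (fun i _ => hD.smul _)
      have hFi : interior F = ∅ := interior_finset_biUnion_empty' t _
        (fun i _ => hD.smul _) (fun i _ => by rw [interior_smul, hDi, smul_set_empty])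
      have hns : ¬ (O k ⊆ F) := by
        intro hsub
        have h2 := interior_maximal hsub (hO k).1
        rw [hFi, subset_empty_iff] at h2
        exact (hO k).2.ne_empty h2
      obtain ⟨z, hzO, hzF⟩ := not_subset.1 hns
      have hzD : ∀ i ∈ t, (x i)⁻¹ * z ∉ D := by
        intro i hi hmem
        exact hzF (mem_biUnion hi ⟨(x i)⁻¹ * z, hmem, by simp [smul_eq_mul]⟩)
      refine ⟨Function.update x k z, ?_, ?_⟩
      · intro i hi
        rcases Finset.mem_insert.1 hi with rfl | hi'
        · simpa using hzO
        · rw [Function.update_of_ne (by rintro rfl; exact hkt hi')]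
          exact hx1 i hi'
      · intro i hi j hj hij
        rcases Finset.mem_insert.1 hi with rfl | hi' <;>
          rcases Finset.mem_insert.1 hj with rfl | hj'
        · exact absurd rfl hij
        · -- i = k, j ∈ t
          rw [Function.update_self, Function.update_of_ne (by rintro rfl; exact hkt hj')]
          intro hmem
          have : (x j)⁻¹ * z ∈ D := by
            rw [← hDs]
            simpa [mul_inv_rev] using Set.inv_mem_inv.2 hmem
          exact hzD j hj' this
        · -- j = k, i ∈ t
          rw [Function.update_self, Function.update_of_ne (by rintro rfl; exact hkt hi')]
          exact hzD i hi'
        · rw [Function.update_of_ne (by rintro rfl; exact hkt hi'),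
            Function.update_of_ne (by rintro rfl; exact hkt hj')]
          exact hx2 i hi' j hj' hij
  obtain ⟨x, hx1, hx2⟩ := hpts Finset.univ
  have hx1' : ∀ i, x i ∈ O i := fun i => hx1 i (Finset.mem_univ i)
  have hx2' : ∀ i j, i ≠ j → (x i)⁻¹ * x j ∉ D :=
    fun i j h => hx2 i (Finset.mem_univ i) j (Finset.mem_univ j) h
  -- rectangular neighborhoods witnessing separation
  have hrect : ∀ i j : ι, i ≠ j → ∃ AB : Set X × Set X, IsOpen AB.1 ∧ IsOpen AB.2 ∧
      x i ∈ AB.1 ∧ x j ∈ AB.2 ∧ ∀ a ∈ AB.1, ∀ b ∈ AB.2, a⁻¹ * b ∉ D := by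
    intro i j hij
    have hopen : IsOpen {q : X × X | q.1⁻¹ * q.2 ∈ Dᶜ} :=
      hD.isOpen_compl.preimage ((continuous_fst.inv).mul continuous_snd)
    have hmem : (x i, x j) ∈ {q : X × X | q.1⁻¹ * q.2 ∈ Dᶜ} := hx2' i j hij
    obtain ⟨A, B, hA, hB, hxA, hxB, hAB⟩ := isOpen_prod_iff.1 hopen (x i) (x j) hmem
    exact ⟨(A, B), hA, hB, hxA, hxB, fun a ha b hb => hAB (mk_mem_prod ha hb)⟩
  choose! AB hA hB hxA hxB hAB using hrect
  let N : ι → Set X := fun i => O i ∩ ⋂ j, (if i = j then univ else (AB i j).1 ∩ (AB j i).2)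
  have hNopen : ∀ i, IsOpen (N i) := by
    intro i
    refine (hO i).1.inter (isOpen_iInter_of_finite fun j => ?_)
    by_cases h : i = j
    · simp [h]
    · simp only [if_neg h]
      exact (hA i j h).inter (hB j i (fun hji => h hji.symm))
  have hNmem : ∀ i, x i ∈ N i := by
    intro i
    refine ⟨hx1' i, mem_iInter.2 fun j => ?_⟩
    by_cases h : i = j
    · simp [h]
    · simp only [if_neg h]
      exact ⟨hxA i j h, hxB j i (fun hji => h hji.symm)⟩
  have hK : ∀ i, ∃ K, IsCompact K ∧ x i ∈ interior K ∧ K ⊆ N i :=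
    fun i => exists_compact_subset (hNopen i) (hNmem i)
  choose K hKc hKx hKN using hK
  have hclK : ∀ i, closure (interior (K i)) ⊆ K i :=
    fun i => closure_minimal interior_subset (hKc i).isClosed
  refine ⟨fun i => interior (K i), fun i =>
    ⟨isOpen_interior, ⟨x i, hKx i⟩, (hKc i).of_isClosed_subset isClosed_closure (hclK i),
      (hclK i).trans ((hKN i).trans inter_subset_left), ?_⟩⟩
  intro j hij a ha b hb
  have haA : a ∈ (AB i j).1 := by
    have : a ∈ N i := (hKN i) (hclK i ha)
    have h2 := mem_iInter.1 this.2 j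
    rw [if_neg hij] at h2
    exact h2.1
  have hbB : b ∈ (AB i j).2 := by
    have : b ∈ N j := (hKN j) (hclK j hb)
    have h2 := mem_iInter.1 this.2 i
    rw [if_neg (fun h => hij h.symm)] at h2
    exact h2.2
  exact hAB i j hij a haA b hbB

/-- Mycielski-type lemma: in a locally compact Hausdorff group, given countably many closed
symmetric nowhere dense sets, there is a continuum-sized family of points pairwise separated
with respect to all of them. -/
theorem exists_transversal_of_nowhereDense {X : Type u} [TopologicalSpace X] [Group X]
    [IsTopologicalGroup X] [LocallyCompactSpace X] [T2Space X]
    (C : ℕ → Set X) (hCc : ∀ n, IsClosed (C n)) (hCi : ∀ n, interior (C n) = ∅)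
    (hCs : ∀ n, (C n)⁻¹ = C n) :
    ∃ p : (ℕ → Bool) → X, ∀ x y : ℕ → Bool, x ≠ y → ∀ n, (p x)⁻¹ * (p y) ∉ C n := by
  classical
  set D : ℕ → Set X := fun m => ⋃ n ∈ Finset.range (m + 1), C n with hD
  have hDc : ∀ m, IsClosed (D m) := fun m =>
    Set.Finite.isClosed_biUnion (Finset.range (m + 1)).finite_toSet (fun n _ => hCc n)
  have hDi : ∀ m, interior (D m) = ∅ := fun m =>
    interior_finset_biUnion_empty' _ _ (fun n _ => hCc n) (fun n _ => hCi n)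
  have hDs : ∀ m, (D m)⁻¹ = D m := by
    intro m
    ext z
    simp only [hD, Set.mem_inv, mem_iUnion, exists_prop]
    have hzn : ∀ n, z⁻¹ ∈ C n ↔ z ∈ C n := by
      intro n
      conv_rhs => rw [← hCs n]
      exact (Set.mem_inv).symm
    simp_rw [hzn]
  have hCD : ∀ n m, n ≤ m → C n ⊆ D m := by
    intro n m hnm
    exact subset_biUnion_of_mem (Finset.mem_range.2 (by omega))
  have key : ∀ (m : ℕ) (O : (Fin m → Bool) → Set X), (∀ s, IsOpen (O s) ∧ (O s).Nonempty) →
      ∃ O' : (Fin (m + 1) → Bool) → Set X, ∀ s, IsOpen (O' s) ∧ (O' s).Nonempty ∧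
        IsCompact (closure (O' s)) ∧ closure (O' s) ⊆ O (Fin.init s) ∧
        ∀ t, s ≠ t → ∀ a ∈ closure (O' s), ∀ b ∈ closure (O' t), a⁻¹ * b ∉ D m := by
    intro m O hO
    obtain ⟨O', hO'⟩ := step_lemma (hDc m) (hDi m) (hDs m)
      (fun s : Fin (m + 1) → Bool => O (Fin.init s)) (fun s => hO _)
    exact ⟨O', fun s => hO' s⟩
  choose! Step hStep using key
  let T : ∀ m, (Fin m → Bool) → Set X := fun m =>
    Nat.rec (motive := fun m => (Fin m → Bool) → Set X)
      (fun _ => Set.univ) (fun m prev => Step m prev) m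
  have hTbase : ∀ m, ∀ s, IsOpen (T m s) ∧ (T m s).Nonempty := by
    intro m
    induction m with
    | zero => exact fun s => ⟨isOpen_univ, univ_nonempty⟩
    | succ m ih =>
      intro s
      have h := hStep m (T m) ih s
      exact ⟨h.1, h.2.1⟩
  have hTspec : ∀ m s, IsCompact (closure (T (m + 1) s)) ∧
      closure (T (m + 1) s) ⊆ T m (Fin.init s) ∧
      ∀ t, s ≠ t → ∀ a ∈ closure (T (m + 1) s), ∀ b ∈ closure (T (m + 1) t), a⁻¹ * b ∉ D m := by
    intro m s
    have h := hStep m (T m) (hTbase m) s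
    exact ⟨h.2.2.1, h.2.2.2.1, h.2.2.2.2⟩
  let res : (ℕ → Bool) → ∀ m, Fin m → Bool := fun x m i => x i
  have hinit : ∀ x m, Fin.init (res x (m + 1)) = res x m := by
    intro x m
    funext i
    simp [Fin.init, res]
  let A : (ℕ → Bool) → ℕ → Set X := fun x m => closure (T (m + 1) (res x (m + 1)))
  have hAint : ∀ x, (⋂ m, A x m).Nonempty := by
    intro x
    apply IsCompact.nonempty_iInter_of_sequence_nonempty_isCompact_isClosed (A x)
    · intro m
      have h := (hTspec (m + 1) (res x (m + 2))).2.1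
      rw [hinit] at h
      exact h.trans subset_closure
    · exact fun m => (hTbase (m + 1) _).2.closure
    · exact (hTspec 0 _).1
    · exact fun m => isClosed_closure
  choose p hp using hAint
  refine ⟨p, ?_⟩
  intro x y hxy n
  obtain ⟨m₀, hm₀⟩ := Function.ne_iff.1 hxy
  set m := max m₀ n with hm
  have hst : res x (m + 1) ≠ res y (m + 1) := by
    intro h
    exact hm₀ (congrFun h ⟨m₀, by omega⟩)
  have h1 : p x ∈ closure (T (m + 1) (res x (m + 1))) := mem_iInter.1 (hp x) m
  have h2 : p y ∈ closure (T (m + 1) (res y (m + 1))) := mem_iInter.1 (hp y) m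
  have hsep := (hTspec m (res x (m + 1))).2.2 (res y (m + 1)) hst _ h1 _ h2
  exact fun hmem => hsep (hCD n m (le_max_right m₀ n) hmem)

/-- `G` is a union of fewer than `𝔠` compact subsets. -/
def SigmaCompactLtContinuum (G : Type*) [TopologicalSpace G] : Prop :=
  ∃ 𝒦 : Set (Set G), Cardinal.mk 𝒦 < Cardinal.continuum ∧
    (∀ K ∈ 𝒦, IsCompact K) ∧ ⋃₀ 𝒦 = Set.univ

theorem open_mapping_lt_continuum_compact
    {G H : Type*} [TopologicalSpace G] [Group G] [IsTopologicalGroup G]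
    [LocallyCompactSpace G] [T2Space G]
    [TopologicalSpace H] [Group H] [IsTopologicalGroup H]
    [LocallyCompactSpace H] [T2Space H]
    (hG : SigmaCompactLtContinuum G)
    (φ : G →* H) (hcont : Continuous φ) (hsurj : Function.Surjective φ) :
    IsOpenMap φ := by
  classical
  -- It suffices to prove openness at the identity.
  suffices key : ∀ W : Set G, W ∈ 𝓝 (1 : G) → φ '' W ∈ 𝓝 (1 : H) by
    intro S hS
    rw [isOpen_iff_mem_nhds]
    rintro y ⟨x, hxS, rfl⟩
    have h1 : (fun g => x⁻¹ * g) '' S ∈ 𝓝 (1 : G) := by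
      have : IsOpen ((fun g => x⁻¹ * g) '' S) := (isOpenMap_mul_left x⁻¹) S hS
      exact this.mem_nhds ⟨x, hxS, inv_mul_cancel x⟩
    have h2 := key _ h1
    have h3 : (fun h => φ x * h) '' (φ '' ((fun g => x⁻¹ * g) '' S)) ∈ 𝓝 (φ x * 1) :=
      (isOpenMap_mul_left (φ x)).image_mem_nhds h2
    rw [mul_one] at h3
    have h4 : (fun h => φ x * h) '' (φ '' ((fun g => x⁻¹ * g) '' S)) = φ '' S := by
      rw [Set.image_image, Set.image_image]
      have : ∀ g, φ x * φ (x⁻¹ * g) = φ g := by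
        intro g; rw [map_mul, map_inv, ← mul_assoc, mul_inv_cancel, one_mul]
      simp only [this]
    rwa [h4] at h3
  intro W hW
  -- a compact symmetric neighborhood `V` of `1` with `V * V ⊆ W`
  obtain ⟨C, hCcomp, hC⟩ := exists_compact_mem_nhds (1 : G)
  obtain ⟨V, hV1, hVclosed, hVsymm, hVmul⟩ :=
    exists_closed_nhds_one_inv_eq_mul_subset
      (Filter.inter_mem hW (interior_mem_nhds.mpr hC) : W ∩ interior C ∈ 𝓝 1)
  have h1V : (1 : G) ∈ V := mem_of_mem_nhds hV1
  have hVW : V * V ⊆ W := hVmul.trans inter_subset_left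
  have hVC : V ⊆ C := by
    intro v hv
    have : v ∈ V * V := by
      have := Set.mul_mem_mul hv h1V
      rwa [mul_one] at this
    exact interior_subset (hVmul this).2
  have hVcomp : IsCompact V := hCcomp.of_isClosed_subset hVclosed hVC
  -- the open subgroup generated by V
  have hpow_comp : ∀ n : ℕ, IsCompact (V ^ (n + 1)) := by
    intro n
    induction n with
    | zero => simpa [pow_one] using hVcomp
    | succ m ih => rw [pow_succ]; exact ih.mul hVcomp
  let U : Subgroup G :=
    { carrier := ⋃ n : ℕ, V ^ (n + 1)
      one_mem' := mem_iUnion.2 ⟨0, by simpa [pow_one] using h1V⟩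
      mul_mem' := by
        rintro a b ha hb
        obtain ⟨m, hm⟩ := mem_iUnion.1 ha
        obtain ⟨n, hn⟩ := mem_iUnion.1 hb
        refine mem_iUnion.2 ⟨m + n + 1, ?_⟩
        rw [show m + n + 1 + 1 = (m + 1) + (n + 1) by omega, pow_add]
        exact Set.mul_mem_mul hm hn
      inv_mem' := by
        rintro a ha
        obtain ⟨n, hn⟩ := mem_iUnion.1 ha
        refine mem_iUnion.2 ⟨n, ?_⟩
        have hsym : (V ^ (n + 1))⁻¹ = V ^ (n + 1) := by
          rw [← inv_pow, hVsymm]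
        rw [← hsym]
        rw [Set.mem_inv, inv_inv]
        exact hn }
  have hUcar : (U : Set G) = ⋃ n : ℕ, V ^ (n + 1) := rfl
  have hVU : V ⊆ (U : Set G) := by
    rw [hUcar]
    intro v hv
    exact mem_iUnion.2 ⟨0, by simpa [pow_one] using hv⟩
  have hUopen : IsOpen (U : Set G) :=
    Subgroup.isOpen_of_mem_nhds U (Filter.mem_of_superset hV1 hVU)
  -- the image subgroup P
  set E : Set H := φ '' V with hE
  have hEcomp : IsCompact E := hVcomp.image hcont
  have h1E : (1 : H) ∈ E := ⟨1, h1V, map_one φ⟩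
  have hEsymm : E⁻¹ = E := by
    ext y
    rw [Set.mem_inv, hE]
    constructor
    · rintro ⟨v, hv, hveq⟩
      refine ⟨v⁻¹, ?_, by rw [map_inv, hveq, inv_inv]⟩
      rw [← hVsymm]; rw [Set.mem_inv, inv_inv]; exact hv
    · rintro ⟨v, hv, rfl⟩
      refine ⟨v⁻¹, ?_, by rw [map_inv]⟩
      rw [← hVsymm]; rw [Set.mem_inv, inv_inv]; exact hv
  have himg : ∀ n : ℕ, φ '' (V ^ (n + 1)) = E ^ (n + 1) := by
    intro n
    induction n with
    | zero => rw [pow_one, pow_one]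
    | succ m ih => rw [pow_succ V (m+1), pow_succ E (m+1), Set.image_mul, ih]
  set P : Subgroup H := U.map φ with hP
  have hPcar : (P : Set H) = ⋃ n : ℕ, E ^ (n + 1) := by
    rw [hP, Subgroup.coe_map, hUcar, image_iUnion]
    exact iUnion_congr himg
  have hEP : ∀ n : ℕ, E ^ (n + 1) ⊆ (P : Set H) := by
    intro n
    rw [hPcar]
    exact subset_iUnion (fun n : ℕ => E ^ (n + 1)) n
  by_cases hPo : ∃ n : ℕ, (interior (E ^ (n + 1))).Nonempty
  · -- Case 1: P is open; Baire argument inside P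
    obtain ⟨n₀, y₀, hy₀⟩ := hPo
    have hPnhds : (P : Set H) ∈ 𝓝 (1 : H) := by
      have hy₀E : y₀ ∈ E ^ (n₀ + 1) := interior_subset hy₀
      have hopen : IsOpen (y₀⁻¹ • interior (E ^ (n₀ + 1))) := isOpen_interior.smul _
      have hmem : (1 : H) ∈ y₀⁻¹ • interior (E ^ (n₀ + 1)) :=
        ⟨y₀, hy₀, by simp [smul_eq_mul]⟩
      have hsub : y₀⁻¹ • interior (E ^ (n₀ + 1)) ⊆ (P : Set H) := by
        rintro _ ⟨z, hz, rfl⟩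
        have hzP : z ∈ P := hEP n₀ (interior_subset hz)
        have hy₀P : y₀ ∈ P := hEP n₀ hy₀E
        exact P.mul_mem (P.inv_mem hy₀P) hzP
      exact Filter.mem_of_superset (hopen.mem_nhds hmem) hsub
    have hPopen : IsOpen (P : Set H) :=
      Subgroup.isOpen_of_mem_nhds P hPnhds
    -- countable family of translates of V covering U
    have hTn : ∀ n : ℕ, ∃ t : Finset G, (∀ g ∈ t, g ∈ V ^ (n + 1)) ∧
        V ^ (n + 1) ⊆ ⋃ g ∈ t, g • V := by
      intro n
      obtain ⟨t, htmem, hcover⟩ := (hpow_comp n).elim_nhds_subcover (fun g => g • V)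
        (fun g _ => by
          show g • V ∈ 𝓝 g
          have h1 : g • V = (fun y => g * y) '' V := rfl
          rw [h1]
          have := (isOpenMap_mul_left g).image_mem_nhds hV1
          rwa [mul_one] at this)
      exact ⟨t, htmem, hcover⟩
    choose t ht1 ht2 using hTn
    set T : Set G := ⋃ n : ℕ, (t n : Set G) with hT
    have hTcount : T.Countable := countable_iUnion (fun n => (t n).countable_toSet)
    haveI : Countable T := hTcount.to_subtype
    have hTU : T ⊆ (U : Set G) := by
      rintro g hg
      obtain ⟨n, hn⟩ := mem_iUnion.1 hg
      rw [hUcar]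
      exact mem_iUnion.2 ⟨n, ht1 n g hn⟩
    have hUcover : (U : Set G) ⊆ ⋃ g ∈ T, g • V := by
      rw [hUcar]
      rintro x hx
      obtain ⟨n, hn⟩ := mem_iUnion.1 hx
      obtain ⟨g, hgt, hg⟩ := by simpa only [mem_iUnion, exists_prop] using ht2 n hn
      exact mem_iUnion.2 ⟨g, mem_iUnion.2 ⟨mem_iUnion.2 ⟨n, hgt⟩, hg⟩⟩
    have hφsmul : ∀ g : G, φ '' (g • V) = φ g • E := by
      intro g
      ext y
      simp only [Set.mem_smul_set, Set.mem_image, hE]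
      constructor
      · rintro ⟨_, ⟨v, hv, rfl⟩, rfl⟩
        exact ⟨φ v, ⟨v, hv, rfl⟩, by simp [smul_eq_mul, map_mul]⟩
      · rintro ⟨_, ⟨v, hv, rfl⟩, rfl⟩
        exact ⟨g • v, ⟨v, hv, rfl⟩, by simp [smul_eq_mul, map_mul]⟩
    -- Baire category inside the open subgroup P
    set SP : Set H := (P : Set H) with hSP
    haveI := hPopen.locallyCompactSpace
    haveI : Nonempty SP := ⟨⟨1, P.one_mem⟩⟩
    have hcovP : ∀ z : SP, ∃ g : T, (z : H) ∈ φ (g : G) • E := by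
      rintro ⟨z, hz⟩
      rw [hPcar] at hz
      obtain ⟨n, hn⟩ := mem_iUnion.1 hz
      rw [← himg n] at hn
      obtain ⟨u, hu, rfl⟩ := hn
      obtain ⟨g, hgt, hg⟩ := by
        simpa only [mem_iUnion, exists_prop] using ht2 n hu
      refine ⟨⟨g, mem_iUnion.2 ⟨n, hgt⟩⟩, ?_⟩
      rw [← hφsmul]
      exact ⟨u, hg, rfl⟩
    obtain ⟨g, hgint⟩ := nonempty_interior_of_iUnion_of_closed
      (f := fun g : T => (Subtype.val : SP → H) ⁻¹' (φ (g : G) • E))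
      (fun g => ((IsCompact.smul _ hEcomp).isClosed).preimage continuous_subtype_val)
      (by
        rw [eq_univ_iff_forall]
        intro z
        obtain ⟨g, hg⟩ := hcovP z
        exact mem_iUnion.2 ⟨g, hg⟩)
    -- transfer interior to H
    obtain ⟨z, hz⟩ := hgint
    have hintH : (z : H) ∈ interior (φ (g : G) • E) := by
      have hopen := hPopen.isOpenMap_subtype_val _
        (isOpen_interior (s := (Subtype.val : SP → H) ⁻¹' (φ (g : G) • E)))
      have hsub : Subtype.val '' interior ((Subtype.val : SP → H) ⁻¹' (φ (g : G) • E))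
          ⊆ φ (g : G) • E := by
        rintro _ ⟨w, hw, rfl⟩
        have hw2 : w ∈ (Subtype.val : SP → H) ⁻¹' (φ (g : G) • E) := interior_subset hw
        exact hw2
      exact interior_maximal hsub hopen ⟨z, hz, rfl⟩
    have hint : (interior E).Nonempty := by
      have heq : interior (φ (g : G) • E) = φ (g : G) • interior E := interior_smul _ _
      rw [heq] at hintH
      exact Set.smul_set_nonempty.1 ⟨_, hintH⟩
    obtain ⟨y, hy⟩ := hint
    obtain ⟨g₀, hg₀V, rfl⟩ := interior_subset hy
    have hopen : IsOpen ((φ g₀)⁻¹ • interior E) := isOpen_interior.smul _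
    have hmem : (1 : H) ∈ (φ g₀)⁻¹ • interior E :=
      ⟨φ g₀, hy, by simp [smul_eq_mul]⟩
    have hsub : (φ g₀)⁻¹ • interior E ⊆ φ '' W := by
      intro w hw
      obtain ⟨_, hw', rfl⟩ := hw
      obtain ⟨v, hv, rfl⟩ := interior_subset hw'
      refine ⟨g₀⁻¹ * v, ?_, by simp [smul_eq_mul, map_mul, map_inv]⟩
      apply hVW
      have hg₀inv : g₀⁻¹ ∈ V := by
        rw [← hVsymm]; rw [Set.mem_inv, inv_inv]; exact hg₀V
      exact Set.mul_mem_mul hg₀inv hv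
    exact Filter.mem_of_superset (hopen.mem_nhds hmem) hsub
  · -- Case 2: all powers of E are nowhere dense; contradiction with the cardinality bound
    exfalso
    push_neg at hPo
    have hCi : ∀ n : ℕ, interior (E ^ (n + 1)) = ∅ := hPo
    have hCc : ∀ n : ℕ, IsClosed (E ^ (n + 1)) := by
      intro n
      have : IsCompact (E ^ (n + 1)) := by
        rw [← himg n]
        exact (hpow_comp n).image hcont
      exact this.isClosed
    have hCs : ∀ n : ℕ, (E ^ (n + 1))⁻¹ = E ^ (n + 1) := by
      intro n
      rw [← inv_pow, hEsymm]
    obtain ⟨p, hsep⟩ := exists_transversal_of_nowhereDense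
      (fun n => E ^ (n + 1)) hCc hCi hCs
    -- the map to the coset space is injective on branches
    have hinj : Function.Injective (fun x : ℕ → Bool => (QuotientGroup.mk (p x) : H ⧸ P)) := by
      intro x y hxy
      by_contra hne
      have hm1 : (p x)⁻¹ * p y ∈ (P : Set H) := QuotientGroup.eq.1 hxy
      rw [hPcar] at hm1
      obtain ⟨n, hn⟩ := mem_iUnion.1 hm1
      exact hsep x y hne n hn
    have hbig : Cardinal.continuum ≤ Cardinal.mk (H ⧸ P) := by
      have hle := Cardinal.lift_mk_le'.mpr
        ⟨(⟨_, hinj⟩ : (ℕ → Bool) ↪ H ⧸ P)⟩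
      have hmk : Cardinal.mk (ℕ → Bool) = Cardinal.continuum := by
        rw [Cardinal.mk_arrow]
        simp [Cardinal.mk_bool, Cardinal.two_power_aleph0]
      rw [hmk, Cardinal.lift_continuum, Cardinal.lift_uzero] at hle
      exact hle
    -- counting: the coset space has fewer than continuum elements
    obtain ⟨𝒦, h𝒦card, h𝒦comp, h𝒦cov⟩ := hG
    set c : G → H ⧸ P := fun g => QuotientGroup.mk (φ g) with hc
    have hconst : ∀ g : G, ∀ u ∈ (U : Set G), c (g * u) = c g := by
      intro g u hu
      rw [hc]
      simp only
      rw [QuotientGroup.eq]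
      have heq : (φ (g * u))⁻¹ * φ g = (φ u)⁻¹ := by
        rw [map_mul, mul_inv_rev]
        group
      rw [heq]
      exact P.inv_mem ⟨u, hu, rfl⟩
    have hfin : ∀ K ∈ 𝒦, (c '' K).Finite := by
      intro K hK
      obtain ⟨s, _, hcover⟩ := (h𝒦comp K hK).elim_nhds_subcover
        (fun g => g • (U : Set G)) (fun g _ => by
          refine (hUopen.smul g).mem_nhds ?_
          exact ⟨1, U.one_mem, by simp⟩)
      have hsubs : c '' K ⊆ c '' s := by
        rintro _ ⟨k, hk, rfl⟩
        obtain ⟨g, hgt, hg⟩ := by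
          simpa only [mem_iUnion, exists_prop] using hcover hk
        obtain ⟨u, hu, rfl⟩ := hg
        have : c (g • u) = c g := by
          simpa [smul_eq_mul] using hconst g u hu
        rw [this]
        exact ⟨g, hgt, rfl⟩
      exact (s.finite_toSet.image c).subset hsubs
    have hcov : ∀ q : H ⧸ P, ∃ K : 𝒦, q ∈ c '' (K : Set G) := by
      intro q
      obtain ⟨h, rfl⟩ := QuotientGroup.mk_surjective q
      obtain ⟨g, rfl⟩ := hsurj h
      have : g ∈ ⋃₀ 𝒦 := h𝒦cov ▸ mem_univ g
      obtain ⟨K, hK, hgK⟩ := this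
      exact ⟨⟨K, hK⟩, g, hgK, rfl⟩
    have henum : ∀ K : 𝒦, ∃ e : ℕ → H ⧸ P, c '' (K : Set G) ⊆ Set.range e := by
      intro K
      rcases (c '' (K : Set G)).eq_empty_or_nonempty with hempty | hne
      · exact ⟨fun _ => QuotientGroup.mk 1, by rw [hempty]; exact empty_subset _⟩
      · obtain ⟨f, hf⟩ := Set.Countable.exists_eq_range ((hfin K K.2).countable) hne
        exact ⟨f, hf ▸ subset_rfl⟩
    choose e he using henum
    have hsurj2 : Function.Surjective (fun q : 𝒦 × ℕ => e q.1 q.2) := by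
      intro q
      obtain ⟨K, hq⟩ := hcov q
      obtain ⟨n, hn⟩ := he K hq
      exact ⟨(K, n), hn⟩
    have hsmall : Cardinal.mk (H ⧸ P) < Cardinal.continuum := by
      have hle := Cardinal.lift_mk_le'.mpr
        ⟨Function.Embedding.ofSurjective _ hsurj2⟩
      have hprod : Cardinal.mk (𝒦 × ℕ) < Cardinal.continuum := by
        rw [Cardinal.mk_prod]
        apply Cardinal.mul_lt_of_lt Cardinal.aleph0_le_continuum
        · rwa [Cardinal.lift_lt_continuum]
        · rw [Cardinal.mk_nat, Cardinal.lift_aleph0]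
          exact Cardinal.aleph0_lt_continuum
      have h2 := hle.trans_lt (Cardinal.lift_lt_continuum.mpr hprod)
      rwa [Cardinal.lift_lt_continuum] at h2
    exact hbig.not_gt hsmall
end

section
/- Let G and H be connected (real) Lie groups and φ : G → H a continuous group homomorphism such that the index of the image φ(G) in H (as an abstract subgroup) is strictly less than 𝔠 = 2^ℵ₀. Then φ is surjective. -/
open Set Pointwise Topology Filter

section Helpers
variable {H : Type*} [Group H] [TopologicalSpace H] [IsTopologicalGroup H]
set_option linter.unusedSectionVars false

/-- Union of two sets, the second closed, both with empty interior, has empty interior. -/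
lemma interior_union_eq_empty' {A B : Set H} (hA : interior A = ∅) (hBc : IsClosed B)
    (hB : interior B = ∅) : interior (A ∪ B) = ∅ := by
  by_contra h
  obtain ⟨x, hx⟩ := nonempty_iff_ne_empty.2 h
  have h1 : IsOpen (interior (A ∪ B) \ B) := isOpen_interior.sdiff hBc
  have h2 : interior (A ∪ B) \ B ⊆ A := fun y hy =>
    (interior_subset hy.1).resolve_right hy.2
  have h3 : interior (A ∪ B) \ B = ∅ := by
    have := interior_maximal h2 h1
    rwa [hA, subset_empty_iff] at this
  have hxB : x ∈ B := by
    by_contra hxB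
    exact absurd h3 (Set.nonempty_iff_ne_empty.1 ⟨x, hx, hxB⟩)
  -- so interior (A∪B) ⊆ B, hence ⊆ interior B = ∅
  have h4 : interior (A ∪ B) ⊆ B := by
    intro y hy
    by_contra hyB
    exact absurd h3 (Set.nonempty_iff_ne_empty.1 ⟨y, hy, hyB⟩)
  have := interior_maximal h4 isOpen_interior
  rw [hB, subset_empty_iff] at this
  exact absurd this (Set.nonempty_iff_ne_empty.1 ⟨x, hx⟩)

lemma interior_biUnion_finset_eq_empty {ι : Type*} (s : Finset ι) (f : ι → Set H)
    (hc : ∀ i, IsClosed (f i)) (hi : ∀ i, interior (f i) = ∅) :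
    interior (⋃ i ∈ s, f i) = ∅ := by
  classical
  induction s using Finset.induction with
  | empty => simp
  | @insert a s ha ih =>
    rw [Finset.set_biUnion_insert, union_comm]
    exact interior_union_eq_empty' ih (hc a) (hi a)

lemma interior_smul_eq_empty {B : Set H} (hB : interior B = ∅) (x : H) :
    interior (x • B) = ∅ := by
  have h1 : x • B = (Homeomorph.mulLeft x) '' B := by
    ext z
    simp only [Set.mem_smul_set, Homeomorph.coe_mulLeft, Set.mem_image]
    constructor
    · rintro ⟨y, hy, rfl⟩; exact ⟨y, hy, rfl⟩
    · rintro ⟨y, hy, rfl⟩; exact ⟨y, hy, rfl⟩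
  rw [h1, ← Homeomorph.image_interior, hB, image_empty]

end Helpers

section Points
variable {H : Type*} [Group H] [TopologicalSpace H] [IsTopologicalGroup H]
set_option linter.unusedSectionVars false

lemma exists_sep_points {ι : Type*} [Fintype ι] [DecidableEq ι] (O : ι → Set H)
    (hO : ∀ i, IsOpen (O i)) (hOne : ∀ i, (O i).Nonempty) (B : Set H)
    (hBc : IsClosed B) (hBi : interior B = ∅) (hBs : B⁻¹ = B) :
    ∃ x : ι → H, (∀ i, x i ∈ O i) ∧ ∀ i j, i ≠ j → (x i)⁻¹ * x j ∉ B := by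
  suffices h : ∀ s : Finset ι, ∃ x : ι → H, (∀ i, x i ∈ O i) ∧
      ∀ i ∈ s, ∀ j ∈ s, i ≠ j → (x i)⁻¹ * x j ∉ B by
    obtain ⟨x, hx, hsep⟩ := h Finset.univ
    exact ⟨x, hx, fun i j hij => hsep i (Finset.mem_univ i) j (Finset.mem_univ j) hij⟩
  intro s
  induction s using Finset.induction with
  | empty => exact ⟨fun i => (hOne i).choose, fun i => (hOne i).choose_spec, by simp⟩
  | @insert a s ha ih =>
    obtain ⟨x, hx, hsep⟩ := ih
    set T : Set H := ⋃ j ∈ s, (x j) • B with hT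
    have hTc : IsClosed T := isClosed_biUnion_finset fun j _ => hBc.smul (x j)
    have hTi : interior T = ∅ :=
      interior_biUnion_finset_eq_empty s _ (fun j => hBc.smul (x j))
        (fun j => interior_smul_eq_empty hBi (x j))
    have hnot : ¬ (O a ⊆ T) := by
      intro hsub
      have := interior_maximal hsub (hO a)
      rw [hTi, subset_empty_iff] at this
      exact absurd this (Set.nonempty_iff_ne_empty.1 (hOne a))
    obtain ⟨xa, hxaO, hxaT⟩ := Set.not_subset.1 hnot
    refine ⟨Function.update x a xa, ?_, ?_⟩
    · intro i
      rcases eq_or_ne i a with rfl | hi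
      · simpa using hxaO
      · simpa [Function.update_of_ne hi] using hx i
    · intro i hi j hj hij
      have key : ∀ j ∈ s, (x j)⁻¹ * xa ∉ B := by
        intro j hj hmem
        exact hxaT (Set.mem_biUnion hj ((mem_smul_set_iff_inv_smul_mem).2 (by simpa using hmem)))
      have key' : ∀ j ∈ s, xa⁻¹ * x j ∉ B := by
        intro j hj hmem
        apply key j hj
        have : (xa⁻¹ * x j)⁻¹ ∈ B⁻¹ := Set.inv_mem_inv.2 hmem
        rwa [hBs, mul_inv_rev, inv_inv] at this
      rcases Finset.mem_insert.1 hi with rfl | his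
      · have hj' : j ∈ s := (Finset.mem_insert.1 hj).resolve_left (Ne.symm hij)
        rw [Function.update_self, Function.update_of_ne (by rintro rfl; exact ha hj')]
        exact key' j hj'
      · rcases Finset.mem_insert.1 hj with rfl | hjs
        · rw [Function.update_self, Function.update_of_ne (by rintro rfl; exact ha his)]
          exact key i his
        · rw [Function.update_of_ne (by rintro rfl; exact ha his),
            Function.update_of_ne (by rintro rfl; exact ha hjs)]
          exact hsep i his j hjs hij

end Points

section Nbhds
variable {H : Type*} [Group H] [TopologicalSpace H] [IsTopologicalGroup H] [LocallyCompactSpace H]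
set_option linter.unusedSectionVars false

lemma exists_sep_nbhds {ι : Type*} [Finite ι] (O : ι → Set H) (hO : ∀ i, IsOpen (O i))
    (x : ι → H) (hx : ∀ i, x i ∈ O i) (B : Set H) (hBc : IsClosed B)
    (hsep : ∀ i j, i ≠ j → (x i)⁻¹ * x j ∉ B) :
    ∃ C : ι → Set H, (∀ i, IsCompact (C i)) ∧ (∀ i, x i ∈ interior (C i)) ∧
      (∀ i, C i ⊆ O i) ∧ ∀ i j, i ≠ j → ∀ a ∈ C i, ∀ b ∈ C j, a⁻¹ * b ∉ B := by
  classical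
  have key : ∀ i j, i ≠ j → ∃ U ∈ 𝓝 (x i), ∃ V ∈ 𝓝 (x j),
      ∀ a ∈ U, ∀ b ∈ V, a⁻¹ * b ∉ B := by
    intro i j hij
    have hcont : ContinuousAt (fun p : H × H => p.1⁻¹ * p.2) (x i, x j) :=
      ((continuous_fst.inv.mul continuous_snd)).continuousAt
    have hmem : Bᶜ ∈ 𝓝 ((x i)⁻¹ * x j) := hBc.isOpen_compl.mem_nhds (hsep i j hij)
    have hpre : (fun p : H × H => p.1⁻¹ * p.2) ⁻¹' Bᶜ ∈ 𝓝 (x i, x j) := hcont hmem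
    rw [mem_nhds_prod_iff] at hpre
    obtain ⟨U, hU, V, hV, hUV⟩ := hpre
    exact ⟨U, hU, V, hV, fun a ha b hb => hUV (Set.mk_mem_prod ha hb)⟩
  choose U hU V hV hUV using key
  set N : ι → Set H := fun i => O i ∩ ((⋂ j, ⋂ (h : i ≠ j), U i j h) ∩
    (⋂ j, ⋂ (h : j ≠ i), V j i h)) with hN
  have hNmem : ∀ i, N i ∈ 𝓝 (x i) := by
    intro i
    refine Filter.inter_mem ((hO i).mem_nhds (hx i)) (Filter.inter_mem ?_ ?_)
    · exact Filter.iInter_mem.2 fun j => Filter.iInter_mem'.2 fun h => hU i j h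
    · exact Filter.iInter_mem.2 fun j => Filter.iInter_mem'.2 fun h => hV j i h
  have hloc : ∀ i, ∃ C ∈ 𝓝 (x i), C ⊆ N i ∧ IsCompact C :=
    fun i => local_compact_nhds (hNmem i)
  choose C hCmem hCN hCc using hloc
  refine ⟨C, hCc, fun i => mem_interior_iff_mem_nhds.2 (hCmem i), 
    fun i => (hCN i).trans inter_subset_left, ?_⟩
  intro i j hij a ha b hb
  have haU : a ∈ U i j hij := by
    have := ((hCN i ha).2).1
    exact (Set.mem_iInter.1 (Set.mem_iInter.1 this j)) hij
  have hbV : b ∈ V i j hij := by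
    have := ((hCN j hb).2).2
    exact (Set.mem_iInter.1 (Set.mem_iInter.1 this i)) hij
  exact hUV i j hij a haU b hbV

end Nbhds

section Chain

noncomputable def myChain {α : ℕ → Type*} (P : ∀ n, α n → Prop) (Q : ∀ n, α n → α (n+1) → Prop)
    (h0 : ∃ a, P 0 a) (hs : ∀ n a, P n a → ∃ b, P (n+1) b ∧ Q n a b) :
    ∀ n, {a : α n // P n a}
  | 0 => ⟨h0.choose, h0.choose_spec⟩
  | (n+1) =>
      ⟨(hs n (myChain P Q h0 hs n).1 (myChain P Q h0 hs n).2).choose,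
       (hs n (myChain P Q h0 hs n).1 (myChain P Q h0 hs n).2).choose_spec.1⟩

lemma myChain_spec {α : ℕ → Type*} (P : ∀ n, α n → Prop) (Q : ∀ n, α n → α (n+1) → Prop)
    (h0 : ∃ a, P 0 a) (hs : ∀ n a, P n a → ∃ b, P (n+1) b ∧ Q n a b) (n : ℕ) :
    Q n (myChain P Q h0 hs n).1 (myChain P Q h0 hs (n+1)).1 := by
  have h := (hs n (myChain P Q h0 hs n).1 (myChain P Q h0 hs n).2).choose_spec.2
  simpa [myChain] using h

end Chain

section Cantor
variable {H : Type*} [Group H] [TopologicalSpace H] [IsTopologicalGroup H] [T2Space H]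
  [LocallyCompactSpace H]
set_option linter.unusedSectionVars false

theorem exists_cantor_sep (W : ℕ → Set H) (hWc : ∀ n, IsCompact (W n))
    (hWi : ∀ n, interior (W n) = ∅) :
    ∃ y : (ℕ → Bool) → H, ∀ σ τ, σ ≠ τ → ∀ m, (y σ)⁻¹ * y τ ∉ W m := by
  classical
  -- cumulative symmetric closed nowhere dense sets
  set B : ℕ → Set H := fun n => ⋃ m ∈ Finset.range (n+1), (W m ∪ (W m)⁻¹) with hB
  have hBc : ∀ n, IsCompact (B n) :=
    fun n => (Finset.range (n+1)).isCompact_biUnion fun m _ => (hWc m).union (hWc m).inv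
  have hBcl : ∀ n, IsClosed (B n) := fun n => (hBc n).isClosed
  have hBi : ∀ n, interior (B n) = ∅ := by
    intro n
    refine interior_biUnion_finset_eq_empty _ _
      (fun m => ((hWc m).union (hWc m).inv).isClosed) (fun m => ?_)
    refine interior_union_eq_empty' (hWi m) (hWc m).inv.isClosed ?_
    have : (W m)⁻¹ = (Homeomorph.inv H) '' (W m) := by
      ext z; simp [Set.mem_inv, Set.mem_image]
    rw [this, ← Homeomorph.image_interior, hWi m, image_empty]
  have hBs : ∀ n, (B n)⁻¹ = B n := by
    intro n
    ext z
    simp only [hB, Set.mem_inv, Set.mem_iUnion, Set.mem_union, Set.mem_inv]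
    constructor
    · rintro ⟨m, hm, h | h⟩
      · exact ⟨m, hm, Or.inr (by simpa using h)⟩
      · exact ⟨m, hm, Or.inl (by simpa using h)⟩
    · rintro ⟨m, hm, h | h⟩
      · exact ⟨m, hm, Or.inr (by simpa using h)⟩
      · exact ⟨m, hm, Or.inl (by simpa using h)⟩
  have hWB : ∀ m n, m ≤ n → W m ⊆ B n := by
    intro m n hmn z hz
    exact Set.mem_biUnion (Finset.mem_range.2 (by omega)) (Or.inl hz)
  -- invariant
  set Inv : ∀ n, ((Fin n → Bool) → Set H) → Prop := fun n c =>
    (∀ s, IsCompact (c s)) ∧ (∀ s, (interior (c s)).Nonempty) ∧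
      ∀ s t, s ≠ t → ∀ a ∈ c s, ∀ b ∈ c t, a⁻¹ * b ∉ B n with hInv
  set Q : ∀ n, ((Fin n → Bool) → Set H) → ((Fin (n+1) → Bool) → Set H) → Prop :=
    fun n c c' => ∀ s, c' s ⊆ c (fun i => s i.castSucc) with hQ
  have h0 : ∃ c, Inv 0 c := by
    obtain ⟨L, hLc, hL1⟩ := exists_compact_mem_nhds (1 : H)
    refine ⟨fun _ => L, fun _ => hLc, fun _ => ⟨1, mem_interior_iff_mem_nhds.2 hL1⟩, ?_⟩
    intro s t hst
    exact absurd (funext fun i => i.elim0) hst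
  have hstep : ∀ n c, Inv n c → ∃ c', Inv (n+1) c' ∧ Q n c c' := by
    intro n c ⟨hc1, hc2, hc3⟩
    set O : (Fin (n+1) → Bool) → Set H := fun s => interior (c (fun i => s i.castSucc)) with hO
    obtain ⟨x, hxO, hxsep⟩ := exists_sep_points O (fun s => isOpen_interior)
      (fun s => hc2 _) (B (n+1)) (hBcl _) (hBi _) (hBs _)
    obtain ⟨C, hCc, hCx, hCO, hCsep⟩ := exists_sep_nbhds O (fun s => isOpen_interior)
      x hxO (B (n+1)) (hBcl _) hxsep
    refine ⟨C, ⟨hCc, fun s => ⟨x s, hCx s⟩, hCsep⟩, ?_⟩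
    intro s
    exact (hCO s).trans interior_subset
  -- build the chain
  set g := myChain Inv Q h0 hstep with hg
  set D : (ℕ → Bool) → ℕ → Set H := fun σ n => (g n).1 (fun i => σ i) with hD
  have hDsub : ∀ σ n, D σ (n+1) ⊆ D σ n := by
    intro σ n
    have h := myChain_spec Inv Q h0 hstep n (fun i : Fin (n+1) => σ i)
    convert h using 2
    rfl
  have hDne : ∀ σ, (⋂ n, D σ n).Nonempty := by
    intro σ
    refine IsCompact.nonempty_iInter_of_sequence_nonempty_isCompact_isClosed _
      (hDsub σ) (fun n => ((g n).2.2.1 _).mono interior_subset) ((g 0).2.1 _)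
      (fun n => ((g n).2.1 _).isClosed)
  choose y hy using hDne
  refine ⟨y, ?_⟩
  intro σ τ hστ m
  obtain ⟨j, hj⟩ := Function.ne_iff.1 hστ
  set n := max m (j+1) with hn
  have hyσ : y σ ∈ (g n).1 (fun i => σ i) := Set.mem_iInter.1 (hy σ) n
  have hyτ : y τ ∈ (g n).1 (fun i => τ i) := Set.mem_iInter.1 (hy τ) n
  have hne : (fun i : Fin n => σ i) ≠ (fun i : Fin n => τ i) := by
    intro heq
    exact hj (congrFun heq ⟨j, by omega⟩)
  intro hmem
  exact (g n).2.2.2 _ _ hne _ hyσ _ hyτ (hWB m n (le_max_left _ _) hmem)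

end Cantor

theorem surjective_of_index_lt_continuum
    {E F : Type*} [NormedAddCommGroup E] [NormedSpace ℝ E] [FiniteDimensional ℝ E]
    [NormedAddCommGroup F] [NormedSpace ℝ F] [FiniteDimensional ℝ F]
    {G H : Type*} [TopologicalSpace G] [ChartedSpace E G] [Group G]
    [IsTopologicalGroup G] [LieGroup (modelWithCornersSelf ℝ E) (⊤ : ℕ∞) G] [ConnectedSpace G]
    [TopologicalSpace H] [ChartedSpace F H] [Group H]
    [IsTopologicalGroup H] [LieGroup (modelWithCornersSelf ℝ F) (⊤ : ℕ∞) H] [ConnectedSpace H]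
    (φ : G →* H) (hcont : Continuous φ)
    (hindex : Cardinal.mk (H ⧸ φ.range) < Cardinal.continuum) :
    Function.Surjective φ := by
  classical
  -- basic topological instances
  haveI hGl : LocallyCompactSpace G := ChartedSpace.locallyCompactSpace E G
  haveI hHl : LocallyCompactSpace H := ChartedSpace.locallyCompactSpace F H
  haveI hH0 : T0Space H := by
    refine ⟨fun {x y} h => ?_⟩
    have hx : x ∈ (chartAt F x).source := mem_chart_source F x
    have hy : y ∈ (chartAt F x).source := h.mem_open_iff (chartAt F x).open_source |>.1 hx
    have heq : (chartAt F x) x = (chartAt F x) y := by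
      by_contra hne
      obtain ⟨A, B, hA, hB, hxA, hyB, hAB⟩ := t2_separation hne
      have h1 : x ∈ (chartAt F x).source ∩ (chartAt F x) ⁻¹' A := ⟨hx, hxA⟩
      have hop : IsOpen ((chartAt F x).source ∩ (chartAt F x) ⁻¹' A) :=
        (chartAt F x).continuousOn.isOpen_inter_preimage (chartAt F x).open_source hA
      have h2 := h.mem_open_iff hop |>.1 h1
      exact (Set.disjoint_iff.1 hAB ⟨h2.2, hyB⟩)
    exact (chartAt F x).injOn hx hy heq
  haveI hH2 : T2Space H := inferInstance
  haveI hGσ : SigmaCompactSpace G := by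
    obtain ⟨L, hLc, hL1⟩ := exists_compact_mem_nhds (1 : G)
    set W : Set G := L ∪ L⁻¹ with hW
    have hWc : IsCompact W := hLc.union hLc.inv
    have hWpow : ∀ n, IsCompact (W ^ (n+1)) := by
      intro n; induction n with
      | zero => simpa using hWc
      | succ k ih => rw [pow_succ]; exact ih.mul hWc
    have hW1 : W ∈ 𝓝 1 := Filter.mem_of_superset hL1 subset_union_left
    refine ⟨⟨fun n => W ^ (n+1), fun n => hWpow n, ?_⟩⟩
    have hopen : IsOpen (↑(Subgroup.closure W) : Set G) :=
      Subgroup.isOpen_of_mem_nhds _ (Filter.mem_of_superset hW1 Subgroup.subset_closure)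
    have htop : (Subgroup.closure W : Set G) = univ := by
      have hclopen : IsClopen (↑(Subgroup.closure W) : Set G) :=
        ⟨(Subgroup.closure W).isClosed_of_isOpen hopen, hopen⟩
      exact hclopen.eq_univ ⟨1, (Subgroup.closure W).one_mem⟩
    rw [iUnion_eq_univ_iff]
    intro x
    have hx : x ∈ Subgroup.closure W := by rw [← SetLike.mem_coe, htop]; trivial
    have hsym : W⁻¹ = W := by rw [hW]; simp [Set.union_inv, union_comm]
    have h1W : (1:G) ∈ W := mem_of_mem_nhds hW1
    refine Subgroup.closure_induction ?_ ⟨0, by simpa using h1W⟩ ?_ ?_ hx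
    · intro y hy; exact ⟨0, by simpa using hy⟩
    · rintro a b - - ⟨m, hm⟩ ⟨k, hk⟩
      refine ⟨m + k + 1, ?_⟩
      have : a * b ∈ W ^ (m+1) * W ^ (k+1) := Set.mul_mem_mul hm hk
      rwa [← pow_add, show m+1+(k+1) = m+k+1+1 by omega] at this
    · rintro a - ⟨m, hm⟩
      refine ⟨m, ?_⟩
      have : a⁻¹ ∈ (W ^ (m+1))⁻¹ := by simpa using hm
      rwa [← inv_pow, hsym] at this
  by_cases hint : interior ((φ.range : Subgroup H) : Set H) = ∅
  · -- the image is nowhere dense: contradiction with small index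
    exfalso
    set W : ℕ → Set H := fun n => φ '' (compactCovering G n) with hWdef
    have hWc : ∀ n, IsCompact (W n) := fun n => (isCompact_compactCovering G n).image hcont
    have hWi : ∀ n, interior (W n) = ∅ := by
      intro n
      have hsub : W n ⊆ (φ.range : Set H) := by
        rintro z ⟨g, -, rfl⟩; exact ⟨g, rfl⟩
      have := interior_mono hsub
      rw [hint, subset_empty_iff] at this
      exact this
    obtain ⟨y, hy⟩ := exists_cantor_sep W hWc hWi
    set f : ULift.{_, 0} (ℕ → Bool) → H ⧸ φ.range := fun σ => ((y σ.down : H) : H ⧸ φ.range)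
      with hf
    have hinj : Function.Injective f := by
      intro σ τ hστ
      by_contra hne
      have hne' : σ.down ≠ τ.down := fun h => hne (ULift.ext _ _ h)
      have hmem : (y σ.down)⁻¹ * y τ.down ∈ φ.range := (QuotientGroup.eq).1 hστ
      obtain ⟨g, hg⟩ := hmem
      obtain ⟨m, hm⟩ := exists_mem_compactCovering g
      exact hy σ.down τ.down hne' m ⟨g, hm, hg⟩
    have hle : Cardinal.continuum ≤ Cardinal.mk (H ⧸ φ.range) := by
      have h1 := Cardinal.mk_le_of_injective hinj
      rw [Cardinal.mk_uLift] at h1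
      have h2 : Cardinal.mk (ℕ → Bool) = Cardinal.continuum := by
        rw [← Cardinal.power_def, Cardinal.mk_bool, Cardinal.mk_nat,
          Cardinal.two_power_aleph0]
      rwa [h2, Cardinal.lift_continuum] at h1
    exact hindex.not_ge hle
  · -- the image has interior: it is open, hence the whole group
    obtain ⟨z, hz⟩ := Set.nonempty_iff_ne_empty.2 hint
    have hopen : IsOpen ((φ.range : Subgroup H) : Set H) :=
      Subgroup.isOpen_of_mem_nhds _ (mem_interior_iff_mem_nhds.1 hz)
    have hclopen : IsClopen ((φ.range : Subgroup H) : Set H) :=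
      ⟨(φ.range).isClosed_of_isOpen hopen, hopen⟩
    have huniv : ((φ.range : Subgroup H) : Set H) = univ :=
      hclopen.eq_univ ⟨1, (φ.range).one_mem⟩
    intro h
    have : h ∈ ((φ.range : Subgroup H) : Set H) := by rw [huniv]; trivial
    exact this
end
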